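/- Let A = M_ψ · M_φ be the product of the two explicit 11×11 rational matrices M_ψ and M_φ. Then there exist real constants c2 ≥ c1 > 0 such that for every integer n ≥ 1, c1·n^2 ≤ (A^n)_{1,1} ≤ c2·n^2, where (A^n)_{1,1} denotes the top-left entry of A^n. (This entry equals the degree of the n-th iterate of the birational map ι_q ∘ ι_t of ℙ² for generic t, so the degree sequence grows quadratically.) -/
import Mathlib


namespace Stmt12

def Mphi : Matrix (Fin 11) (Fin 11) ℚ :=
  !![3, 2, 1, 1, 1, 1, 0, 0, 0, 0, 0;
    -2, -1, -1, -1, -1, -1, 0, 0, 0, 0, 0;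
    -1, -1, -1, 0, 0, 0, 0, 0, 0, 0, 0;
    -1, -1, 0, -1, 0, 0, 0, 0, 0, 0, 0;
    -1, -1, 0, 0, -1, 0, 0, 0, 0, 0, 0;
    -1, -1, 0, 0, 0, -1, 0, 0, 0, 0, 0;
    0, 0, 0, 0, 0, 0, 1, 0, 0, 0, 0;
    0, 0, 0, 0, 0, 0, 0, 1, 0, 0, 0;
    0, 0, 0, 0, 0, 0, 0, 0, 1, 0, 0;
    0, 0, 0, 0, 0, 0, 0, 0, 0, 1, 0;
    0, 0, 0, 0, 0, 0, 0, 0, 0, 0, 1]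

def Mpsi : Matrix (Fin 11) (Fin 11) ℚ :=
  !![3, 0, 0, 0, 0, 0, 2, 1, 1, 1, 1;
    0, 1, 0, 0, 0, 0, 0, 0, 0, 0, 0;
    0, 0, 1, 0, 0, 0, 0, 0, 0, 0, 0;
    0, 0, 0, 1, 0, 0, 0, 0, 0, 0, 0;
    0, 0, 0, 0, 1, 0, 0, 0, 0, 0, 0;
    0, 0, 0, 0, 0, 1, 0, 0, 0, 0, 0;
    -2, 0, 0, 0, 0, 0, -1, -1, -1, -1, -1;
    -1, 0, 0, 0, 0, 0, -1, -1, 0, 0, 0;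
    -1, 0, 0, 0, 0, 0, -1, 0, -1, 0, 0;
    -1, 0, 0, 0, 0, 0, -1, 0, 0, -1, 0;
    -1, 0, 0, 0, 0, 0, -1, 0, 0, 0, -1]


def MA : Matrix (Fin 11) (Fin 11) ℚ :=
  !![9, 6, 3, 3, 3, 3, 2, 1, 1, 1, 1;
    -2, -1, -1, -1, -1, -1, 0, 0, 0, 0, 0;
    -1, -1, -1, 0, 0, 0, 0, 0, 0, 0, 0;
    -1, -1, 0, -1, 0, 0, 0, 0, 0, 0, 0;
    -1, -1, 0, 0, -1, 0, 0, 0, 0, 0, 0;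
    -1, -1, 0, 0, 0, -1, 0, 0, 0, 0, 0;
    -6, -4, -2, -2, -2, -2, -1, -1, -1, -1, -1;
    -3, -2, -1, -1, -1, -1, -1, -1, 0, 0, 0;
    -3, -2, -1, -1, -1, -1, -1, 0, -1, 0, 0;
    -3, -2, -1, -1, -1, -1, -1, 0, 0, -1, 0;
    -3, -2, -1, -1, -1, -1, -1, 0, 0, 0, -1]

set_option maxHeartbeats 2000000 in
lemma prod_eq : Mpsi * Mphi = MA := by
  ext i j
  rw [Matrix.mul_apply]
  fin_cases i <;> fin_cases j <;>
    norm_num [Mpsi, Mphi, MA, Fin.sum_univ_succ]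

def v (n : ℕ) : Fin 11 → ℚ :=
  ![8*n^2+1, -4*n^2+2*n, -2*n^2+n, -2*n^2+n, -2*n^2+n, -2*n^2+n,
    -4*n^2-2*n, -2*n^2-n, -2*n^2-n, -2*n^2-n, -2*n^2-n]

set_option maxHeartbeats 1000000 in
lemma key (n : ℕ) : MA.mulVec (v n) = v (n+1) := by
  funext i
  rw [Matrix.mulVec]
  fin_cases i <;>
    · norm_num [MA, v, dotProduct, Fin.sum_univ_succ]
      ring

lemma col_eq : ∀ n : ℕ, 1 ≤ n → ∀ i, (MA ^ n) i 0 = v n i := by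
  intro n hn
  induction n, hn using Nat.le_induction with
  | base =>
    intro i
    rw [pow_one]
    fin_cases i <;> norm_num [MA, v]
  | succ n hn ih =>
    intro i
    rw [pow_succ', Matrix.mul_apply]
    calc ∑ k, MA i k * (MA ^ n) k 0 = ∑ k, MA i k * v n k := by
          simp only [ih]
      _ = MA.mulVec (v n) i := rfl
      _ = v (n+1) i := by rw [key]

/-- The top-left entry of `(M_ψ · M_φ)ⁿ`, which is the degree of the `n`-th iterate of the
birational map `ι_q ∘ ι_t` of `ℙ²` for generic `t`, grows quadratically in `n`. -/
theorem quadratic_degree_growth :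
    ∃ c₁ c₂ : ℝ, 0 < c₁ ∧ c₁ ≤ c₂ ∧
      ∀ n : ℕ, 1 ≤ n →
        c₁ * (n : ℝ) ^ 2 ≤ ((((Mpsi * Mphi) ^ n) 0 0 : ℚ) : ℝ) ∧
        ((((Mpsi * Mphi) ^ n) 0 0 : ℚ) : ℝ) ≤ c₂ * (n : ℝ) ^ 2 := by
  refine ⟨8, 9, by norm_num, by norm_num, fun n hn => ?_⟩
  have h := col_eq n hn 0
  rw [prod_eq, h]
  have hv : v n 0 = 8 * (n : ℚ)^2 + 1 := rfl
  rw [hv]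
  have hn1 : (1 : ℝ) ≤ (n : ℝ) := by exact_mod_cast hn
  have hn2 : (1 : ℝ) ≤ (n : ℝ)^2 := by nlinarith
  push_cast
  constructor <;> nlinarith

end Stmt12
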